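/- Let the sequences (Y_t, U_{1t}, U_{2t}, U_{3t}, G_t) be generated by the SDAO algorithm: Y_{t+1} minimizes the surrogate Ψ̂(·, L_t; Y_t) over the box B = {Y : max_{ijk}|Y_{ijk}| ≤ a}, and U_{1,t+1}, U_{2,t+1}, U_{3,t+1}, G_{t+1} successively minimize their proximal least-squares subproblems against Y_{t+1}, with L_t = (U_{1t}, U_{2t}, U_{3t})·G_t. Then the objective Ψ(Y, L) = ‖L − Y‖²_F + λψ(Y) satisfies the combined descent inequality Ψ(Y_{t+1}, L_{t+1}) + α₁ Σ_{i=1}^{3} ‖U_{i,t+1} − U_{it}‖²_F + α₂‖G_{t+1} − G_t‖²_F ≤ Ψ(Y_t, L_t) for every t. -/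

import Mathlib

/-- The Welsch loss ψ(Y) = 2γ Σ_p (1 − exp(−(Y_p − X_p)²/(2γ))). -/
noncomputable def welsch {n1 n2 n3 : ℕ} (γ : ℝ) (X Y : Fin n1 × Fin n2 × Fin n3 → ℝ) : ℝ :=
  2 * γ * ∑ p : Fin n1 × Fin n2 × Fin n3, (1 - Real.exp (-(Y p - X p) ^ 2 / (2 * γ)))

/-- The exponential weight ω(Z)_p = exp(−(Z_p − X_p)²/(2γ)). -/
noncomputable def weight {n1 n2 n3 : ℕ} (γ : ℝ) (X Z : Fin n1 × Fin n2 × Fin n3 → ℝ) :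
    Fin n1 × Fin n2 × Fin n3 → ℝ :=
  fun p => Real.exp (-(Z p - X p) ^ 2 / (2 * γ))

/-- The quadratic surrogate ψ̂(Y; Z). -/
noncomputable def welschSurrogate {n1 n2 n3 : ℕ} (γ : ℝ)
    (X Y Z : Fin n1 × Fin n2 × Fin n3 → ℝ) : ℝ :=
  welsch γ X Z + ∑ p : Fin n1 × Fin n2 × Fin n3, weight γ X Z p * (Y p - X p) ^ 2
    - ∑ p : Fin n1 × Fin n2 × Fin n3, weight γ X Z p * (Z p - X p) ^ 2

/-- The objective Ψ(Y, L) = ‖L − Y‖²_F + λψ(Y). -/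
noncomputable def PsiObj {n1 n2 n3 : ℕ} (γ lam : ℝ)
    (X Y L : Fin n1 × Fin n2 × Fin n3 → ℝ) : ℝ :=
  (∑ p : Fin n1 × Fin n2 × Fin n3, (L p - Y p) ^ 2) + lam * welsch γ X Y

/-- The surrogate objective Ψ̂(Y, L; Z) = ‖L − Y‖²_F + λψ̂(Y; Z). -/
noncomputable def PsiSurrogate {n1 n2 n3 : ℕ} (γ lam : ℝ)
    (X Y L Z : Fin n1 × Fin n2 × Fin n3 → ℝ) : ℝ :=
  (∑ p : Fin n1 × Fin n2 × Fin n3, (L p - Y p) ^ 2) + lam * welschSurrogate γ X Y Z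

/-- The Tucker multilinear action `(A₁, A₂, A₃)·G` of three matrices on a core tensor,
defined entrywise by `[(A₁, A₂, A₃)·G]_{ijk} = Σ_{a,b,c} (A₁)_{ia}(A₂)_{jb}(A₃)_{kc} G_{abc}`. -/
noncomputable def tucker {m1 m2 m3 r1 r2 r3 : ℕ}
    (A1 : Matrix (Fin m1) (Fin r1) ℝ) (A2 : Matrix (Fin m2) (Fin r2) ℝ)
    (A3 : Matrix (Fin m3) (Fin r3) ℝ) (G : Fin r1 × Fin r2 × Fin r3 → ℝ) :
    Fin m1 × Fin m2 × Fin m3 → ℝ :=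
  fun p => ∑ a, ∑ b, ∑ c, A1 p.1 a * A2 p.2.1 b * A3 p.2.2 c * G (a, b, c)

/-- Squared Frobenius norm of a matrix: the sum of squares of all entries. -/
noncomputable def frobSqM {n m : ℕ} (A : Matrix (Fin n) (Fin m) ℝ) : ℝ :=
  ∑ i, ∑ j, A i j ^ 2

/-- Squared Frobenius norm of a tensor: the sum of squares of all entries. -/
noncomputable def frobSqT {n1 n2 n3 : ℕ} (Z : Fin n1 × Fin n2 × Fin n3 → ℝ) : ℝ :=
  ∑ p : Fin n1 × Fin n2 × Fin n3, Z p ^ 2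

lemma welsch_le_surrogate {n1 n2 n3 : ℕ} (γ : ℝ) (hγ : 0 < γ)
    (X Y Z : Fin n1 × Fin n2 × Fin n3 → ℝ) :
    welsch γ X Y ≤ welschSurrogate γ X Y Z := by
  have key : ∀ p : Fin n1 × Fin n2 × Fin n3,
      2 * γ * (1 - Real.exp (-(Y p - X p) ^ 2 / (2 * γ)))
      ≤ 2 * γ * (1 - Real.exp (-(Z p - X p) ^ 2 / (2 * γ)))
        + Real.exp (-(Z p - X p) ^ 2 / (2 * γ)) * (Y p - X p) ^ 2
        - Real.exp (-(Z p - X p) ^ 2 / (2 * γ)) * (Z p - X p) ^ 2 := by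
    intro p
    set u := Y p - X p with hu
    set v := Z p - X p with hv
    have hw : (0:ℝ) < Real.exp (-v ^ 2 / (2 * γ)) := Real.exp_pos _
    have h1 : (v ^ 2 - u ^ 2) / (2 * γ) + 1 ≤ Real.exp ((v ^ 2 - u ^ 2) / (2 * γ)) :=
      Real.add_one_le_exp _
    have h2 : Real.exp (-v ^ 2 / (2 * γ)) * Real.exp ((v ^ 2 - u ^ 2) / (2 * γ))
        = Real.exp (-u ^ 2 / (2 * γ)) := by
      rw [← Real.exp_add]; ring_nf
    have h3 := mul_le_mul_of_nonneg_left h1 hw.le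
    rw [h2] at h3
    have h4 : Real.exp (-v ^ 2 / (2 * γ)) * ((v ^ 2 - u ^ 2) / (2 * γ) + 1) * (2 * γ)
        = Real.exp (-v ^ 2 / (2 * γ)) * (v ^ 2 - u ^ 2) + Real.exp (-v ^ 2 / (2 * γ)) * (2 * γ) := by
      field_simp
    nlinarith [mul_le_mul_of_nonneg_right h3 (by linarith : (0:ℝ) ≤ 2 * γ)]
  unfold welschSurrogate welsch weight
  rw [Finset.mul_sum, Finset.mul_sum, sub_eq_add_neg, ← Finset.sum_neg_distrib,
    ← Finset.sum_add_distrib, ← Finset.sum_add_distrib]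
  apply Finset.sum_le_sum
  intro p _
  have := key p
  linarith

lemma welschSurrogate_self {n1 n2 n3 : ℕ} (γ : ℝ) (X Z : Fin n1 × Fin n2 × Fin n3 → ℝ) :
    welschSurrogate γ X Z Z = welsch γ X Z := by
  simp [welschSurrogate]

lemma frobSqM_self_sub {n m : ℕ} (A : Matrix (Fin n) (Fin m) ℝ) : frobSqM (A - A) = 0 := by
  simp [frobSqM]

lemma frobSqT_self_sub {n1 n2 n3 : ℕ} (Z : Fin n1 × Fin n2 × Fin n3 → ℝ) :
    frobSqT (Z - Z) = 0 := by
  simp [frobSqT]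

lemma frobSqT_sub_eq {n1 n2 n3 : ℕ} (A B : Fin n1 × Fin n2 × Fin n3 → ℝ) :
    frobSqT (A - B) = ∑ p : Fin n1 × Fin n2 × Fin n3, (A p - B p) ^ 2 := by
  simp [frobSqT]

/-- Combined descent of the SDAO algorithm: if `Y_{t+1}` minimizes the surrogate
`Ψ̂(·, L_t; Y_t)` over the box `B = {Y : ‖Y‖_∞ ≤ a}` and the Tucker factors and core are
updated by successive exact minimization of their proximal least-squares subproblems against
`Y_{t+1}`, then the objective `Ψ` decreases by at least the accumulated proximal terms. -/
theorem sdao_combined_descent {n1 n2 n3 r1 r2 r3 : ℕ}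
    (γ lam a α1 α2 : ℝ) (hγ : 0 < γ) (hlam : 0 < lam) (ha : 0 < a)
    (hα1 : 0 < α1) (hα2 : 0 < α2)
    (X : Fin n1 × Fin n2 × Fin n3 → ℝ)
    (Y : ℕ → (Fin n1 × Fin n2 × Fin n3 → ℝ))
    (U1 : ℕ → Matrix (Fin n1) (Fin r1) ℝ) (U2 : ℕ → Matrix (Fin n2) (Fin r2) ℝ)
    (U3 : ℕ → Matrix (Fin n3) (Fin r3) ℝ) (G : ℕ → (Fin r1 × Fin r2 × Fin r3 → ℝ))
    (L : ℕ → (Fin n1 × Fin n2 × Fin n3 → ℝ))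
    (hL : ∀ t, L t = tucker (U1 t) (U2 t) (U3 t) (G t))
    (hYbox : ∀ t, ∀ p, |Y t p| ≤ a)
    (hYmin : ∀ t, ∀ Y' : Fin n1 × Fin n2 × Fin n3 → ℝ, (∀ p, |Y' p| ≤ a) →
      PsiSurrogate γ lam X (Y (t + 1)) (L t) (Y t) ≤ PsiSurrogate γ lam X Y' (L t) (Y t))
    (hU1 : ∀ t, ∀ V : Matrix (Fin n1) (Fin r1) ℝ,
      frobSqT (tucker (U1 (t + 1)) (U2 t) (U3 t) (G t) - Y (t + 1))
          + α1 * frobSqM (U1 (t + 1) - U1 t)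
        ≤ frobSqT (tucker V (U2 t) (U3 t) (G t) - Y (t + 1)) + α1 * frobSqM (V - U1 t))
    (hU2 : ∀ t, ∀ V : Matrix (Fin n2) (Fin r2) ℝ,
      frobSqT (tucker (U1 (t + 1)) (U2 (t + 1)) (U3 t) (G t) - Y (t + 1))
          + α1 * frobSqM (U2 (t + 1) - U2 t)
        ≤ frobSqT (tucker (U1 (t + 1)) V (U3 t) (G t) - Y (t + 1)) + α1 * frobSqM (V - U2 t))
    (hU3 : ∀ t, ∀ V : Matrix (Fin n3) (Fin r3) ℝ,
      frobSqT (tucker (U1 (t + 1)) (U2 (t + 1)) (U3 (t + 1)) (G t) - Y (t + 1))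
          + α1 * frobSqM (U3 (t + 1) - U3 t)
        ≤ frobSqT (tucker (U1 (t + 1)) (U2 (t + 1)) V (G t) - Y (t + 1))
          + α1 * frobSqM (V - U3 t))
    (hG : ∀ t, ∀ H : Fin r1 × Fin r2 × Fin r3 → ℝ,
      frobSqT (tucker (U1 (t + 1)) (U2 (t + 1)) (U3 (t + 1)) (G (t + 1)) - Y (t + 1))
          + α2 * frobSqT (G (t + 1) - G t)
        ≤ frobSqT (tucker (U1 (t + 1)) (U2 (t + 1)) (U3 (t + 1)) H - Y (t + 1))
          + α2 * frobSqT (H - G t)) :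
    ∀ t, PsiObj γ lam X (Y (t + 1)) (L (t + 1))
        + α1 * (frobSqM (U1 (t + 1) - U1 t) + frobSqM (U2 (t + 1) - U2 t)
            + frobSqM (U3 (t + 1) - U3 t))
        + α2 * frobSqT (G (t + 1) - G t)
      ≤ PsiObj γ lam X (Y t) (L t) := by
  intro t
  -- Step 1: surrogate minimization descent in Y
  have hstep1 : PsiObj γ lam X (Y (t + 1)) (L t) ≤ PsiObj γ lam X (Y t) (L t) := by
    have h1 : PsiObj γ lam X (Y (t + 1)) (L t)
        ≤ PsiSurrogate γ lam X (Y (t + 1)) (L t) (Y t) := by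
      unfold PsiObj PsiSurrogate
      have hm := welsch_le_surrogate γ hγ X (Y (t + 1)) (Y t)
      nlinarith
    have h2 := hYmin t (Y t) (hYbox t)
    have h3 : PsiSurrogate γ lam X (Y t) (L t) (Y t) = PsiObj γ lam X (Y t) (L t) := by
      unfold PsiSurrogate PsiObj
      rw [welschSurrogate_self]
    linarith
  -- Step 2: proximal chain
  have c1 := hU1 t (U1 t)
  have c2 := hU2 t (U2 t)
  have c3 := hU3 t (U3 t)
  have c4 := hG t (G t)
  rw [frobSqM_self_sub] at c1 c2 c3
  rw [frobSqT_self_sub] at c4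
  have hLt : tucker (U1 t) (U2 t) (U3 t) (G t) = L t := (hL t).symm
  have hLt1 : tucker (U1 (t + 1)) (U2 (t + 1)) (U3 (t + 1)) (G (t + 1)) = L (t + 1) :=
    (hL (t + 1)).symm
  rw [hLt] at c1
  rw [hLt1] at c4
  have hchain : frobSqT (L (t + 1) - Y (t + 1))
      + α1 * (frobSqM (U1 (t + 1) - U1 t) + frobSqM (U2 (t + 1) - U2 t)
          + frobSqM (U3 (t + 1) - U3 t))
      + α2 * frobSqT (G (t + 1) - G t)
      ≤ frobSqT (L t - Y (t + 1)) := by linarith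
  have e1 := frobSqT_sub_eq (L (t + 1)) (Y (t + 1))
  have e2 := frobSqT_sub_eq (L t) (Y (t + 1))
  unfold PsiObj at hstep1 ⊢
  rw [e1, e2] at hchain
  linarith
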